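/- Let A be an abelian group, R an integral domain, and W : A → R an elliptic net. Then W is an odd function: for every v ∈ A, W(−v) = −W(v). -/

import Mathlib

/-- An *elliptic net* is a map `W : A → R` from an abelian group `A` to an integral
domain `R` such that `W 0 = 0` and, for all `p q r s : A`,
`W (p+q+s) * W (p-q) * W (r+s) * W r + W (q+r+s) * W (q-r) * W (p+s) * W p
  + W (r+p+s) * W (r-p) * W (q+s) * W q = 0`. -/
def IsEllipticNet' {A R : Type*} [AddCommGroup A] [CommRing R] (W : A → R) : Prop :=
  W 0 = 0 ∧ ∀ p q r s : A,
    W (p + q + s) * W (p - q) * W (r + s) * W r +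
      W (q + r + s) * W (q - r) * W (p + s) * W p +
      W (r + p + s) * W (r - p) * W (q + s) * W q = 0

/-- An elliptic net with values in an integral domain is an odd function. -/
theorem ellipticNet_odd {A R : Type*} [AddCommGroup A] [CommRing R] [IsDomain R]
    (W : A → R) (hW : IsEllipticNet' W) : ∀ v : A, W (-v) = -W v := by
  obtain ⟨h0, hrel⟩ := hW
  have key : ∀ a b : A, W b * W b * (W a * (W a + W (-a))) = 0 := by
    intro a b
    have := hrel a b 0 0
    simp only [add_zero, zero_add, sub_zero, zero_sub, h0, mul_zero, zero_mul] at this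
    linear_combination this
  by_cases hz : ∀ b : A, W b = 0
  · intro v; rw [hz v, hz (-v), neg_zero]
  · push_neg at hz
    obtain ⟨b, hb⟩ := hz
    have key2 : ∀ a : A, W a * (W a + W (-a)) = 0 := by
      intro a
      have := key a b
      rcases mul_eq_zero.mp this with h | h
      · exact absurd (mul_self_eq_zero.mp h) hb
      · exact h
    intro v
    rcases mul_eq_zero.mp (key2 v) with h | h
    · have := key2 (-v)
      rw [neg_neg, h, add_zero, mul_self_eq_zero] at this
      rw [this, h, neg_zero]
    · linear_combination h
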